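/- arXiv:1501.01259 — 2 statements merged into one kernel-verified Lean document; each statement's English description precedes it below -/
import Mathlib

section
/- Let Γ be a graph and γ ∈ Z₁(Γ, ℤ) a 1-cycle induced by a circuit (a simple closed combinatorial path). If γ = α + β where α, β ∈ Z₁(Γ, ℤ) are disjoint 1-chains (no edge has nonzero coefficient in both α and β when written in the edge basis), then α = 0 or β = 0. -/
open Finsupp

/-- A (combinatorial, oriented) graph: the 1-skeleton data of a complex. -/
structure CombGraph where
  V : Type
  E : Type
  ends : E → V × V

/-- ℓ¹-norm of an integral chain. -/
def l1Z {α : Type} (c : α →₀ ℤ) : ℕ := c.sum fun _ v => v.natAbs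

/-- Two chains are disjoint if no basis element has nonzero coefficient in both. -/
def DisjointChains {α : Type} (a b : α →₀ ℤ) : Prop := ∀ x, a x = 0 ∨ b x = 0

namespace CombGraph

variable (Γ : CombGraph)

/-- Source vertex of a directed edge (an edge with an orientation bit). -/
def src (p : Γ.E × Bool) : Γ.V := if p.2 then (Γ.ends p.1).1 else (Γ.ends p.1).2

/-- Target vertex of a directed edge. -/
def tgt (p : Γ.E × Bool) : Γ.V := if p.2 then (Γ.ends p.1).2 else (Γ.ends p.1).1

/-- A nonempty cyclically-consecutive list of directed edges. -/
def IsClosedPath (l : List (Γ.E × Bool)) : Prop :=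
  l ≠ [] ∧ ∀ i : Fin l.length,
    Γ.tgt (l.get i) = Γ.src (l.get ⟨(↑i + 1) % l.length, Nat.mod_lt _ i.pos⟩)

/-- A circuit: a simple closed combinatorial path (no repeated edges or vertices). -/
def IsCircuit (l : List (Γ.E × Bool)) : Prop :=
  Γ.IsClosedPath l ∧ (l.map Prod.fst).Nodup ∧ (l.map Γ.src).Nodup

/-- The 1-cycle induced by a closed path: coefficient ±1 on each traversed edge. -/
noncomputable def pathCycle (l : List (Γ.E × Bool)) : Γ.E →₀ ℤ :=
  (l.map fun p => Finsupp.single p.1 (if p.2 then (1 : ℤ) else -1)).sum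

/-- The simplicial boundary map `C₁ → C₀`. -/
noncomputable def d1 (γ : Γ.E →₀ ℤ) : Γ.V →₀ ℤ :=
  γ.sum fun e c => c • (Finsupp.single (Γ.ends e).2 (1 : ℤ) - Finsupp.single (Γ.ends e).1 1)

/-- A 1-chain is a cycle if its boundary vanishes. -/
def IsCycle (γ : Γ.E →₀ ℤ) : Prop := Γ.d1 γ = 0

/-- A graph is fine if each edge lies in only finitely many circuits of each bounded length. -/
def Fine : Prop :=
  ∀ (e : Γ.E) (L : ℕ),
    {l : List (Γ.E × Bool) | Γ.IsCircuit l ∧ e ∈ l.map Prod.fst ∧ l.length ≤ L}.Finite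

/-- Walks from `u` to `v`. -/
def IsWalk : List (Γ.E × Bool) → Γ.V → Γ.V → Prop
  | [], u, v => u = v
  | p :: l, u, v => Γ.src p = u ∧ IsWalk l (Γ.tgt p) v

/-- Combinatorial distance in a graph (∞ if there is no walk). -/
noncomputable def gdist (u v : Γ.V) : ℕ∞ :=
  ⨅ l ∈ {l : List (Γ.E × Bool) | Γ.IsWalk l u v}, (l.length : ℕ∞)

def Connected : Prop := ∀ u v : Γ.V, Γ.gdist u v < ⊤

/-- Gromov hyperbolicity via the four-point condition. -/
def Hyperbolic : Prop :=
  ∃ δ : ℕ, ∀ x y z w : Γ.V,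
    Γ.gdist x y + Γ.gdist z w ≤
      max (Γ.gdist x z + Γ.gdist y w) (Γ.gdist x w + Γ.gdist y z) + (δ : ℕ∞)

end CombGraph

/-- A combinatorial 2-complex: a graph together with a set of 2-cells, each with a
boundary 1-chain. -/
structure TwoComplex extends toGraph : CombGraph where
  F : Type
  fb : F → E →₀ ℤ

namespace TwoComplex

variable (X : TwoComplex)

/-- The boundary map `C₂ → C₁` over ℤ. -/
noncomputable def d2 (μ : X.F →₀ ℤ) : X.E →₀ ℤ := μ.sum fun f c => c • X.fb f

/-- The filling norm `‖γ‖_∂` over ℤ (∞ if `γ` bounds no 2-chain). -/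
noncomputable def fillNorm (γ : X.E →₀ ℤ) : ℕ∞ :=
  ⨅ μ ∈ {μ : X.F →₀ ℤ | X.d2 μ = γ}, (l1Z μ : ℕ∞)

/-- The homological Dehn function of `X` over ℤ. -/
noncomputable def FV (k : ℕ) : ℕ∞ :=
  ⨆ γ ∈ {γ : X.E →₀ ℤ | X.toGraph.IsCycle γ ∧ l1Z γ ≤ k}, X.fillNorm γ

end TwoComplex

open scoped Classical

namespace CombGraph

variable {Γ : CombGraph}

lemma pathCycle_cons (p : Γ.E × Bool) (l : List (Γ.E × Bool)) :
    Γ.pathCycle (p :: l) = Finsupp.single p.1 (if p.2 then (1:ℤ) else -1) + Γ.pathCycle l := by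
  simp [CombGraph.pathCycle]

lemma pathCycle_apply_not_mem : ∀ (l : List (Γ.E × Bool)) (x : Γ.E),
    x ∉ l.map Prod.fst → Γ.pathCycle l x = 0
  | [], x, _ => by simp [CombGraph.pathCycle]
  | p :: l, x, hx => by
    simp only [List.map_cons, List.mem_cons, not_or] at hx
    rw [pathCycle_cons, Finsupp.add_apply, Finsupp.single_apply,
      if_neg (fun h => hx.1 h.symm), zero_add]
    exact pathCycle_apply_not_mem l x hx.2

lemma pathCycle_apply_mem : ∀ (l : List (Γ.E × Bool)), (l.map Prod.fst).Nodup →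
    ∀ p ∈ l, Γ.pathCycle l p.1 = if p.2 then (1:ℤ) else -1
  | [], _, p, hp => by simp at hp
  | q :: l, hnd, p, hp => by
    simp only [List.map_cons, List.nodup_cons] at hnd
    rw [pathCycle_cons, Finsupp.add_apply]
    rcases List.mem_cons.mp hp with h | h
    · subst h
      rw [Finsupp.single_apply, if_pos rfl,
        pathCycle_apply_not_mem l _ hnd.1, add_zero]
    · have hne : ¬ q.1 = p.1 := fun he => hnd.1 (he ▸ List.mem_map_of_mem h)
      rw [Finsupp.single_apply, if_neg hne, zero_add]
      exact pathCycle_apply_mem l hnd.2 p h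

lemma d1_apply (γ : Γ.E →₀ ℤ) (v : Γ.V) :
    Γ.d1 γ v = γ.sum fun e c =>
      c * ((if (Γ.ends e).2 = v then (1:ℤ) else 0) - (if (Γ.ends e).1 = v then 1 else 0)) := by
  rw [CombGraph.d1, Finsupp.sum_apply]
  refine Finsupp.sum_congr fun e _ => ?_
  simp only [Finsupp.smul_apply, Finsupp.sub_apply, Finsupp.single_apply, smul_eq_mul]

end CombGraph
open scoped Classical in
/-- If a 1-cycle induced by a circuit decomposes as a sum of two
disjoint 1-cycles, then one of them is trivial. -/
theorem circuit_cycle_no_disjoint_decomposition (Γ : CombGraph)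
    (l : List (Γ.E × Bool)) (hl : Γ.IsCircuit l)
    (α β : Γ.E →₀ ℤ) (hα : Γ.IsCycle α) (hβ : Γ.IsCycle β)
    (hdisj : DisjointChains α β) (hsum : Γ.pathCycle l = α + β) :
    α = 0 ∨ β = 0 := by
  obtain ⟨⟨hne, hcons⟩, hednd, hvnd⟩ := hl
  have hn0 : 0 < l.length := List.length_pos_iff.mpr hne
  haveI : NeZero l.length := ⟨hn0.ne'⟩
  set n := l.length with hnn
  -- coefficients of the path cycle
  have hpc : ∀ p ∈ l, Γ.pathCycle l p.1 = if p.2 then (1:ℤ) else -1 :=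
    CombGraph.pathCycle_apply_mem l hednd
  -- both chains vanish off the edges of `l`
  have hoff : ∀ x, x ∉ l.map Prod.fst → α x = 0 ∧ β x = 0 := by
    intro x hx
    have h0 : α x + β x = 0 := by
      rw [← Finsupp.add_apply, ← hsum]
      exact CombGraph.pathCycle_apply_not_mem l x hx
    rcases hdisj x with h | h
    · exact ⟨h, by linarith⟩
    · exact ⟨by linarith, h⟩
  -- the vertex function is injective
  have hvinj : Function.Injective fun i : Fin n => Γ.src (l.get i) := by
    intro i j hij
    have hinj := List.nodup_iff_injective_get.mp hvnd
    have hlen : (l.map Γ.src).length = n := by simp [hnn]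
    have hi : ((l.map Γ.src).get ⟨i, by omega⟩) = Γ.src (l.get i) := by
      simp
    have hj : ((l.map Γ.src).get ⟨j, by omega⟩) = Γ.src (l.get j) := by
      simp
    have h2 := hinj (a₁ := ⟨i, by omega⟩) (a₂ := ⟨j, by omega⟩) (by rw [hi, hj]; exact hij)
    have h3 := congrArg Fin.val h2
    exact Fin.ext h3
  -- successor in `Fin n`
  have hsucc : ∀ j : Fin n, ((j + 1 : Fin n) : ℕ) = (j.val + 1) % n := by
    intro j
    rw [Fin.val_add, Fin.val_one', Nat.add_mod (j : ℕ) 1 n, Nat.mod_eq_of_lt j.isLt]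
  -- consecutive condition, in `Fin n` form
  have hcons' : ∀ j : Fin n, Γ.tgt (l.get j) = Γ.src (l.get (j + 1)) := by
    intro j
    have := hcons j
    convert this using 3
    exact Fin.ext (hsucc j)
  -- evaluation of the boundary at a vertex, as a sum over positions
  have hd1 : ∀ (ζ : Γ.E →₀ ℤ), (∀ x, x ∉ l.map Prod.fst → ζ x = 0) → ∀ v : Γ.V,
      Γ.d1 ζ v = ∑ j : Fin n, ζ (l.get j).1 *
        ((if (Γ.ends (l.get j).1).2 = v then (1:ℤ) else 0)
          - (if (Γ.ends (l.get j).1).1 = v then 1 else 0)) := by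
    intro ζ hζ v
    have hsub : ζ.support ⊆ (l.map Prod.fst).toFinset := by
      intro x hx
      rw [List.mem_toFinset]
      by_contra hxx
      exact (Finsupp.mem_support_iff.mp hx) (hζ x hxx)
    rw [CombGraph.d1_apply,
      Finsupp.sum_of_support_subset ζ hsub _ (fun i _ => by ring),
      List.sum_toFinset _ hednd, List.map_map, ← List.ofFn_getElem_eq_map, List.sum_ofFn]
    exact Finset.sum_congr rfl fun k _ => rfl
  -- the sign and the rescaled coefficient sequence
  set C : Fin n → ℤ := fun j => if (l.get j).2 then (1:ℤ) else -1 with hC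
  set S : Fin n → ℤ := fun j => α (l.get j).1 * C j with hS
  have hCC : ∀ j, C j * C j = 1 := by
    intro j
    cases h : (l.get j).2 <;>
      simp only [hC, h, Bool.false_eq_true, if_false, if_true] <;> norm_num
  have hαe : ∀ j, α (l.get j).1 = S j * C j := by
    intro j
    rw [hS]
    dsimp only
    rw [mul_assoc, hCC, mul_one]
  -- rewriting each summand
  have hterm : ∀ (j i : Fin n),
      α (l.get j).1 * ((if (Γ.ends (l.get j).1).2 = Γ.src (l.get i) then (1:ℤ) else 0)
        - (if (Γ.ends (l.get j).1).1 = Γ.src (l.get i) then 1 else 0))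
      = S j * ((if j + 1 = i then (1:ℤ) else 0) - (if j = i then 1 else 0)) := by
    intro j i
    have h1 : C j * ((if (Γ.ends (l.get j).1).2 = Γ.src (l.get i) then (1:ℤ) else 0)
        - (if (Γ.ends (l.get j).1).1 = Γ.src (l.get i) then 1 else 0))
        = (if Γ.tgt (l.get j) = Γ.src (l.get i) then (1:ℤ) else 0)
          - (if Γ.src (l.get j) = Γ.src (l.get i) then 1 else 0) := by
      by_cases h : (l.get j).2 <;>
        simp only [hC, h, if_true, if_false, CombGraph.src, CombGraph.tgt, Bool.false_eq_true] <;> split_ifs <;> ring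
    have h2 : (if Γ.tgt (l.get j) = Γ.src (l.get i) then (1:ℤ) else 0)
        = (if j + 1 = i then 1 else 0) := by
      rw [hcons' j]
      by_cases hv : (j + 1 : Fin n) = i
      · rw [if_pos (by rw [hv]), if_pos hv]
      · rw [if_neg (fun hcontra => hv (hvinj hcontra)), if_neg hv]
    have h3 : (if Γ.src (l.get j) = Γ.src (l.get i) then (1:ℤ) else 0)
        = (if j = i then 1 else 0) := by
      by_cases hv : j = i
      · rw [if_pos (by rw [hv]), if_pos hv]
      · rw [if_neg (fun hcontra => hv (hvinj hcontra)), if_neg hv]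
    rw [hαe j, mul_assoc, h1, h2, h3]
  -- computing the sum of indicators
  have hsum1 : ∀ (T : Fin n → ℤ) (i : Fin n),
      ∑ j : Fin n, T j * ((if j + 1 = i then (1:ℤ) else 0) - (if j = i then 1 else 0))
      = T (i - 1) - T i := by
    intro T i
    simp only [mul_sub, Finset.sum_sub_distrib, mul_ite, mul_one, mul_zero]
    congr 1
    · have he : ∀ j : Fin n, (j + 1 = i) = (j = i - 1) := fun j =>
        propext (eq_sub_iff_add_eq).symm
      simp_rw [he]
      rw [Finset.sum_ite_eq' Finset.univ (i - 1) T]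
      simp
    · rw [Finset.sum_ite_eq' Finset.univ i T]
      simp
  -- the boundary condition gives that S is "locally constant"
  have hstep : ∀ j : Fin n, S j = S (j + 1) := by
    intro j
    have hz : Γ.d1 α (Γ.src (l.get (j + 1))) = 0 := by
      have h := hα
      rw [CombGraph.IsCycle] at h
      rw [h, Finsupp.coe_zero, Pi.zero_apply]
    have h4 : Γ.d1 α (Γ.src (l.get (j + 1))) = ∑ k : Fin n,
        S k * ((if k + 1 = j + 1 then (1:ℤ) else 0) - (if k = j + 1 then 1 else 0)) := by
      rw [hd1 α (fun x hx => (hoff x hx).1) (Γ.src (l.get (j + 1)))]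
      exact Finset.sum_congr rfl fun k _ => hterm k (j + 1)
    have h5 := (h4.symm.trans hz)
    rw [hsum1 S (j + 1), add_sub_cancel_right, sub_eq_zero] at h5
    exact h5
  -- hence S is constant
  open Fin.NatCast Fin.CommRing in
  have hconst : ∀ j : Fin n, S j = S 0 := by
    have key : ∀ m : ℕ, S ((m : Fin n)) = S 0 := by
      intro m
      induction m with
      | zero => simp
      | succ k ih =>
        have : ((k + 1 : ℕ) : Fin n) = ((k : ℕ) : Fin n) + 1 := by push_cast; ring
        rw [this, ← hstep, ih]
    intro j
    calc S j = S (((j : ℕ) : Fin n)) := by rw [Fin.cast_val_eq_self]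
    _ = S 0 := key _
  -- values of S
  have hab : ∀ j : Fin n, α (l.get j).1 + β (l.get j).1 = C j := by
    intro j
    rw [← Finsupp.add_apply, ← hsum]
    exact hpc (l.get j) (l.get_mem _)
  have hS01 : ∀ j : Fin n, S j = 0 ∨ S j = 1 := by
    intro j
    rcases hdisj (l.get j).1 with h | h
    · left; rw [hS]; dsimp only; rw [h, zero_mul]
    · right
      have hαv : α (l.get j).1 = C j := by have := hab j; rw [h, add_zero] at this; exact this
      rw [hS]; dsimp only; rw [hαv, hCC]
  rcases hS01 0 with h0 | h0
  · left
    ext x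
    rw [Finsupp.coe_zero, Pi.zero_apply]
    by_cases hx : x ∈ l.map Prod.fst
    · obtain ⟨p, hpl, hpx⟩ := List.mem_map.mp hx
      obtain ⟨j, hj⟩ := List.get_of_mem hpl
      rw [← hpx, ← hj, hαe j, hconst j, h0, zero_mul]
    · exact (hoff x hx).1
  · right
    ext x
    rw [Finsupp.coe_zero, Pi.zero_apply]
    by_cases hx : x ∈ l.map Prod.fst
    · obtain ⟨p, hpl, hpx⟩ := List.mem_map.mp hx
      obtain ⟨j, hj⟩ := List.get_of_mem hpl
      have hαv : α (l.get j).1 = C j := by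
        rw [hαe j, hconst j, h0, one_mul]
      have := hab j
      rw [hαv] at this
      have hβ0 : β (l.get j).1 = 0 := by linarith
      rw [← hpx, ← hj, hβ0]
    · exact (hoff x hx).2
end

section
/- Let X be a cell complex and Y ⊆ X a subcomplex with the same 1-skeleton, such that FV_{Y,ℤ}(k) < ∞ for all k and every 2-cell of X has boundary of ℓ¹-norm at most n. Set C = FV_{Y,ℤ}(n). Then FV_{X,ℤ}(k) and FV_{Y,ℤ}(k) satisfy FV_{Y,ℤ}(k) ≤ C·FV_{X,ℤ}(k) for every k; more precisely, any 2-chain μ ∈ C₂(X,ℤ) can be replaced by ν ∈ C₂(Y,ℤ) with ∂ν = ∂μ and ‖ν‖₁ ≤ C‖μ‖₁. -/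
open Finsupp

section Aux

lemma l1Z_zero {α : Type} : l1Z (0 : α →₀ ℤ) = 0 := by simp [l1Z]

lemma l1Z_eq_zero {α : Type} {ν : α →₀ ℤ} (h : l1Z ν = 0) : ν = 0 := by
  ext x
  simp only [Finsupp.coe_zero, Pi.zero_apply]
  by_contra hx
  have hmem : x ∈ ν.support := Finsupp.mem_support_iff.mpr hx
  have h' : ∑ y ∈ ν.support, (ν y).natAbs = 0 := h
  exact hx (Int.natAbs_eq_zero.mp ((Finset.sum_eq_zero_iff).mp h' x hmem))

lemma l1Z_add_le {α : Type} (a b : α →₀ ℤ) : l1Z (a + b) ≤ l1Z a + l1Z b := by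
  classical
  have h1 : l1Z (a + b) ≤ ∑ x ∈ a.support ∪ b.support, ((a + b) x).natAbs :=
    Finset.sum_le_sum_of_subset Finsupp.support_add
  have h2 : ∑ x ∈ a.support ∪ b.support, ((a + b) x).natAbs ≤
      ∑ x ∈ a.support ∪ b.support, ((a x).natAbs + (b x).natAbs) := by
    refine Finset.sum_le_sum fun x _ => ?_
    simpa [Finsupp.add_apply] using Int.natAbs_add_le (a x) (b x)
  have ha : ∑ x ∈ a.support ∪ b.support, (a x).natAbs = l1Z a :=
    (Finset.sum_subset Finset.subset_union_left
      (fun x _ hx => by simp [Finsupp.notMem_support_iff.mp hx])).symm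
  have hb : ∑ x ∈ a.support ∪ b.support, (b x).natAbs = l1Z b :=
    (Finset.sum_subset Finset.subset_union_right
      (fun x _ hx => by simp [Finsupp.notMem_support_iff.mp hx])).symm
  calc l1Z (a + b) ≤ ∑ x ∈ a.support ∪ b.support, ((a x).natAbs + (b x).natAbs) :=
        h1.trans h2
    _ = l1Z a + l1Z b := by rw [Finset.sum_add_distrib, ha, hb]

lemma l1Z_smul {α : Type} (c : ℤ) (x : α →₀ ℤ) : l1Z (c • x) = c.natAbs * l1Z x := by
  rcases eq_or_ne c 0 with rfl | hc
  · simp [l1Z]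
  · unfold l1Z
    rw [Finsupp.sum, Finsupp.sum, Finsupp.support_smul_eq hc, Finset.mul_sum]
    refine Finset.sum_congr rfl fun y _ => ?_
    simp [Int.natAbs_mul]

lemma l1Z_finset_sum_le {α β : Type} (s : Finset β) (g : β → α →₀ ℤ) :
    l1Z (∑ i ∈ s, g i) ≤ ∑ i ∈ s, l1Z (g i) := by
  classical
  induction s using Finset.induction_on with
  | empty => simp [l1Z]
  | insert _ _ h ih =>
    rw [Finset.sum_insert h, Finset.sum_insert h]
    exact (l1Z_add_le _ _).trans (by gcongr)

noncomputable def d2Lin (X : TwoComplex) : (X.F →₀ ℤ) →ₗ[ℤ] (X.E →₀ ℤ) :=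
  Finsupp.lsum ℤ fun f => LinearMap.id.smulRight (X.fb f)

lemma d2_eq_lin (X : TwoComplex) (μ : X.F →₀ ℤ) : X.d2 μ = d2Lin X μ := rfl

lemma exists_le_of_biInf_le {α : Type*} {S : Set α} {g : α → ℕ} {C : ℕ∞} (hC : C ≠ ⊤)
    (h : (⨅ x ∈ S, (g x : ℕ∞)) ≤ C) : ∃ x ∈ S, (g x : ℕ∞) ≤ C := by
  by_contra hc
  push_neg at hc
  have h2 : C + 1 ≤ ⨅ x ∈ S, (g x : ℕ∞) :=
    le_iInf₂ fun x hx => (ENat.add_one_le_iff hC).mpr (hc x hx)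
  exact absurd ((ENat.add_one_le_iff hC).mp (h2.trans h)) (lt_irrefl C)

end Aux
/-- Let Y ⊆ X be a subcomplex with the same 1-skeleton Γ, with
FV_{Y,ℤ} finite-valued and all 2-cells of X of boundary norm at most n; put
C = FV_{Y,ℤ}(n). Then FV_{Y,ℤ}(k) ≤ C · FV_{X,ℤ}(k) for all k; more precisely every
2-chain μ of X can be replaced by a 2-chain ν of Y with the same boundary and
‖ν‖₁ ≤ C·‖μ‖₁. -/
theorem FV_subcomplex_bound (Γ : CombGraph) (FX FY : Type)
    (fbX : FX → Γ.E →₀ ℤ) (fbY : FY → Γ.E →₀ ℤ)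
    (ι : FY → FX) (hι : Function.Injective ι) (hsub : ∀ f, fbX (ι f) = fbY f)
    (hbdX : ∀ f : FX, Γ.d1 (fbX f) = 0)
    (n : ℕ) (hn : ∀ f : FX, l1Z (fbX f) ≤ n)
    (hfin : ∀ k : ℕ, (TwoComplex.mk Γ FY fbY).FV k < ⊤) :
    (∀ k : ℕ, (TwoComplex.mk Γ FY fbY).FV k ≤
        (TwoComplex.mk Γ FY fbY).FV n * (TwoComplex.mk Γ FX fbX).FV k) ∧
    (∀ μ : FX →₀ ℤ, ∃ ν : FY →₀ ℤ,
        (TwoComplex.mk Γ FY fbY).d2 ν = (TwoComplex.mk Γ FX fbX).d2 μ ∧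
        (l1Z ν : ℕ∞) ≤ (TwoComplex.mk Γ FY fbY).FV n * (l1Z μ : ℕ∞)) := by
  classical
  set Y : TwoComplex := TwoComplex.mk Γ FY fbY with hY
  set X' : TwoComplex := TwoComplex.mk Γ FX fbX with hX'
  set CY : ℕ∞ := Y.FV n with hCY
  have hC : CY ≠ ⊤ := (hfin n).ne
  set c : ℕ := CY.toNat with hc
  have hcC : (c : ℕ∞) = CY := ENat.coe_toNat hC
  -- every 2-cell boundary of X fills in Y with cost ≤ C
  have key : ∀ f : FX, ∃ ν : FY →₀ ℤ, Y.d2 ν = fbX f ∧ (l1Z ν : ℕ∞) ≤ CY := by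
    intro f
    have h1 : Y.fillNorm (fbX f) ≤ CY := by
      refine le_trans ?_ (le_refl CY)
      exact le_iSup₂ (f := fun γ (_ : γ ∈ {γ : Γ.E →₀ ℤ | Γ.IsCycle γ ∧ l1Z γ ≤ n}) =>
        Y.fillNorm γ) (fbX f) ⟨hbdX f, hn f⟩
    exact exists_le_of_biInf_le hC h1
  choose νf hνf hνle using key
  have hνc : ∀ f : FX, l1Z (νf f) ≤ c := fun f =>
    Nat.cast_le.mp (by rw [hcC]; exact hνle f)
  -- part 2
  have part2 : ∀ μ : FX →₀ ℤ, ∃ ν : FY →₀ ℤ,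
      Y.d2 ν = X'.d2 μ ∧ (l1Z ν : ℕ∞) ≤ CY * (l1Z μ : ℕ∞) := by
    intro μ
    refine ⟨μ.sum fun f cf => cf • νf f, ?_, ?_⟩
    · rw [d2_eq_lin, map_finsuppSum]
      show (μ.sum fun f cf => d2Lin Y (cf • νf f)) = μ.sum fun f cf => cf • fbX f
      refine Finsupp.sum_congr fun f _ => ?_
      rw [map_smul, ← d2_eq_lin, hνf f]
    · have h1 : l1Z (μ.sum fun f cf => cf • νf f) ≤
          ∑ f ∈ μ.support, l1Z ((μ f) • νf f) := l1Z_finset_sum_le _ _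
      have h2 : ∑ f ∈ μ.support, l1Z ((μ f) • νf f) ≤ c * l1Z μ := by
        calc ∑ f ∈ μ.support, l1Z ((μ f) • νf f)
            = ∑ f ∈ μ.support, (μ f).natAbs * l1Z (νf f) := by
              refine Finset.sum_congr rfl fun f _ => l1Z_smul _ _
          _ ≤ ∑ f ∈ μ.support, (μ f).natAbs * c := by
              refine Finset.sum_le_sum fun f _ => Nat.mul_le_mul_left _ (hνc f)
          _ = l1Z μ * c := by rw [← Finset.sum_mul]; rfl
          _ = c * l1Z μ := Nat.mul_comm _ _
      calc (l1Z (μ.sum fun f cf => cf • νf f) : ℕ∞) ≤ ((c * l1Z μ : ℕ) : ℕ∞) :=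
            Nat.cast_le.mpr (h1.trans h2)
        _ = CY * (l1Z μ : ℕ∞) := by rw [Nat.cast_mul, hcC]
  refine ⟨?_, part2⟩
  intro k
  by_cases hzero : CY = 0
  · -- degenerate case: all boundaries vanish
    have hfb0 : ∀ f : FX, fbX f = 0 := by
      intro f
      have hle := hνle f
      rw [hzero] at hle
      have h0 : l1Z (νf f) = 0 := by exact_mod_cast Nat.le_zero.mp (by exact_mod_cast hle)
      rw [← hνf f, l1Z_eq_zero h0, d2_eq_lin, map_zero]
    have hd2Y : ∀ ν : FY →₀ ℤ, Y.d2 ν = 0 := by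
      intro ν
      show (ν.sum fun f cf => cf • fbY f) = 0
      rw [Finsupp.sum_congr (g2 := fun f cf => (0 : Γ.E →₀ ℤ))
        (fun f _ => by rw [← hsub f, hfb0 (ι f), smul_zero])]
      exact Finset.sum_const_zero
    rw [hzero, zero_mul]
    refine iSup₂_le fun γ hγ => ?_
    have hfill : Y.fillNorm γ ≤ Y.FV k :=
      le_iSup₂ (f := fun γ (_ : γ ∈ {γ : Γ.E →₀ ℤ | Γ.IsCycle γ ∧ l1Z γ ≤ k}) =>
        Y.fillNorm γ) γ hγ
    obtain ⟨ν, hν, -⟩ := exists_le_of_biInf_le (hfin k).ne hfill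
    have hγ0 : γ = 0 := by rw [← hν]; exact hd2Y ν
    have : Y.fillNorm γ ≤ (l1Z (0 : FY →₀ ℤ) : ℕ∞) :=
      iInf₂_le (0 : FY →₀ ℤ) (by rw [hγ0]; exact hd2Y 0)
    simpa [l1Z_zero] using this
  · by_cases htop : X'.FV k = ⊤
    · rw [htop, ENat.mul_top hzero]; exact le_top
    · refine iSup₂_le fun γ hγ => ?_
      have h1 : X'.fillNorm γ ≤ X'.FV k :=
        le_iSup₂ (f := fun γ (_ : γ ∈ {γ : Γ.E →₀ ℤ | Γ.IsCycle γ ∧ l1Z γ ≤ k}) =>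
          X'.fillNorm γ) γ hγ
      obtain ⟨μ, hμ, hμle⟩ := exists_le_of_biInf_le htop h1
      obtain ⟨ν, hν, hνle2⟩ := part2 μ
      have h2 : Y.fillNorm γ ≤ (l1Z ν : ℕ∞) := iInf₂_le ν (hν.trans hμ)
      exact h2.trans (hνle2.trans (mul_le_mul_right hμle CY))
end
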